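/- Let n ≥ 1 and k ≥ 1 be odd integers and set m = (n+k)/2. For every family of integers λ_{a,b}, indexed by pairs of natural numbers (a,b) with a + b ≤ m, there exists a polynomial P ∈ ℤ[t] involving only odd powers of t and of degree at most n, such that for every integer c the identity Σ_{a+b ≤ m} λ_{a,b} · y^{2a} · x^{2b} · (y + c·x)^{2(m−a−b)} = P(c) · x^n · y^k holds in the ring R(n,k,c). -/
import Mathlib


open MvPolynomial

noncomputable section

/-- The ideal `(X^{n+1}, Y^{k+1} + c·X·Y^k)` in `ℤ[X,Y]`. -/
def relIdeal (n k : ℕ) (c : ℤ) : Ideal (MvPolynomial (Fin 2) ℤ) :=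
  Ideal.span {(X 0 : MvPolynomial (Fin 2) ℤ) ^ (n + 1),
    (X 1 : MvPolynomial (Fin 2) ℤ) ^ (k + 1) + C c * X 0 * (X 1 : MvPolynomial (Fin 2) ℤ) ^ k}

/-- The ring `R(n,k,c) = ℤ[X,Y]/(X^{n+1}, Y^{k+1} + c·X·Y^k)`. -/
abbrev R (n k : ℕ) (c : ℤ) := MvPolynomial (Fin 2) ℤ ⧸ relIdeal n k c

/-- The image `x` of `X` in `R(n,k,c)`. -/
def x (n k : ℕ) (c : ℤ) : R n k c := Ideal.Quotient.mk (relIdeal n k c) (X 0)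

/-- The image `y` of `Y` in `R(n,k,c)`. -/
def y (n k : ℕ) (c : ℤ) : R n k c := Ideal.Quotient.mk (relIdeal n k c) (X 1)

lemma x_pow_succ (n k : ℕ) (c : ℤ) : x n k c ^ (n+1) = 0 := by
  rw [x, ← map_pow, Ideal.Quotient.eq_zero_iff_mem]
  exact Ideal.subset_span (Set.mem_insert _ _)

lemma x_pow_eq_zero (n k : ℕ) (c : ℤ) {i : ℕ} (hi : n < i) : x n k c ^ i = 0 := by
  have h : i = (n+1) + (i - (n+1)) := by omega
  rw [h, pow_add, x_pow_succ, zero_mul]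

lemma y_rel (n k : ℕ) (c : ℤ) :
    y n k c ^ (k+1) = -((c : R n k c) * (x n k c * y n k c ^ k)) := by
  have h : (Ideal.Quotient.mk (relIdeal n k c))
      ((X 1 : MvPolynomial (Fin 2) ℤ) ^ (k + 1) + C c * X 0 * (X 1) ^ k) = 0 := by
    rw [Ideal.Quotient.eq_zero_iff_mem]
    exact Ideal.subset_span (Set.mem_insert_of_mem _ rfl)
  rw [map_add, map_pow, map_mul, map_mul, map_pow] at h
  have hC : (Ideal.Quotient.mk (relIdeal n k c)) (C c) = (c : R n k c) := by
    simp
  rw [hC] at h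
  rw [show y n k c = Ideal.Quotient.mk (relIdeal n k c) (X 1) from rfl,
    show x n k c = Ideal.Quotient.mk (relIdeal n k c) (X 0) from rfl]
  linear_combination h

lemma xy_shift (n k : ℕ) (c : ℤ) (i j : ℕ) :
    x n k c ^ i * y n k c ^ (k + j) = ((-c : ℤ) : R n k c)^j * (x n k c ^ (i + j) * y n k c ^ k) := by
  induction j generalizing i with
  | zero => simp
  | succ j ih =>
    have h1 : x n k c ^ i * y n k c ^ (k + (j+1))
        = y n k c ^ j * (x n k c ^ i * y n k c ^ (k+1)) := by ring
    rw [h1, y_rel]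
    calc y n k c ^ j * (x n k c ^ i * -((c : R n k c) * (x n k c * y n k c ^ k)))
        = -((c : R n k c) * (x n k c ^ (i+1) * y n k c ^ (k + j))) := by ring
      _ = ((-c : ℤ) : R n k c)^(j+1) * (x n k c ^ (i + (j+1)) * y n k c ^ k) := by
          rw [ih (i+1), show i + 1 + j = i + (j+1) by omega]
          push_cast
          ring

lemma mono_eval (n k : ℕ) (c : ℤ) (i j : ℕ) (hij : i + j = n + k) :
    x n k c ^ i * y n k c ^ j =
      ((if k ≤ j then ((-c)^(j-k) : ℤ) else 0) : R n k c) * (x n k c ^ n * y n k c ^ k) := by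
  by_cases h : k ≤ j
  · rw [if_pos h]
    calc x n k c ^ i * y n k c ^ j = x n k c ^ i * y n k c ^ (k + (j-k)) := by
          rw [show k + (j-k) = j by omega]
      _ = ((-c : ℤ) : R n k c)^(j-k) * (x n k c ^ (i+(j-k)) * y n k c ^ k) := xy_shift n k c i (j-k)
      _ = _ := by rw [show i + (j-k) = n by omega]; push_cast; ring
  · rw [if_neg h]
    have hz : x n k c ^ i = 0 := x_pow_eq_zero n k c (by omega)
    rw [hz]
    push_cast
    ring

/-- the coefficient sum -/
def s (n k m a b : ℕ) : ℤ :=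
  ∑ j ∈ Finset.range (2*(m-a-b)+1),
    if k ≤ 2*a + j then ((2*(m-a-b)).choose j : ℤ) * (-1)^(2*a+j-k) else 0

lemma s_eq_zero (n k m a b : ℕ) (hm : n + k = 2*m) (hab : a + b ≤ m) (hb : n < 2*b) :
    s n k m a b = 0 := by
  apply Finset.sum_eq_zero
  intro j hj
  rw [Finset.mem_range] at hj
  rw [if_neg]
  omega

lemma term_eval (n k m : ℕ) (hm : n + k = 2*m) (a b : ℕ) (hab : a + b ≤ m) (c : ℤ) :
    y n k c ^ (2*a) * x n k c ^ (2*b) * (y n k c + (c : R n k c) * x n k c) ^ (2*(m-a-b))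
      = ((s n k m a b * c^(n - 2*b) : ℤ) : R n k c) * (x n k c ^ n * y n k c ^ k) := by
  set d := m - a - b with hd
  have hs : ((s n k m a b * c^(n - 2*b) : ℤ) : R n k c)
      = ∑ j ∈ Finset.range (2*d+1),
        (((if k ≤ 2*a + j then ((2*d).choose j : ℤ) * (-1)^(2*a+j-k) else 0) * c^(n-2*b) : ℤ) : R n k c) := by
    rw [s, Finset.sum_mul]
    push_cast
    rfl
  rw [add_pow, Finset.mul_sum, hs, Finset.sum_mul]
  apply Finset.sum_congr rfl
  intro j hj
  rw [Finset.mem_range] at hj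
  have step1 : y n k c ^ (2*a) * x n k c ^ (2*b)
        * (y n k c ^ j * ((c : R n k c) * x n k c) ^ (2*d-j) * ((2*d).choose j : ℕ))
      = ((((2*d).choose j : ℤ) * c^(2*d-j) : ℤ) : R n k c)
        * (x n k c ^ (2*b+(2*d-j)) * y n k c ^ (2*a+j)) := by
    push_cast
    rw [mul_pow]
    ring
  rw [step1, mono_eval n k c (2*b+(2*d-j)) (2*a+j) (by omega)]
  by_cases h : k ≤ 2*a + j
  · simp only [if_pos h]
    have e1 : (2*d-j) + (2*a+j-k) = n - 2*b := by omega
    rw [← e1, show ((-c)^(2*a+j-k) : ℤ) = (-1)^(2*a+j-k) * c^(2*a+j-k) from neg_pow c _]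
    push_cast [pow_add]
    ring
  · simp only [if_neg h]
    push_cast
    ring

/-- Let `n, k ≥ 1` be odd with `n + k = 2m`. For every family of integers `λ_{a,b}`
indexed by pairs `(a,b)` with `a + b ≤ m`, there is a polynomial `P ∈ ℤ[t]` involving
only odd powers of `t` and of degree at most `n` such that for every integer `c`,
`Σ_{a+b≤m} λ_{a,b}·y^{2a}·x^{2b}·(y + c·x)^{2(m-a-b)} = P(c)·x^n·y^k` in `R(n,k,c)`. -/
theorem stmt4 (n k m : ℕ) (hn : 1 ≤ n) (hk : 1 ≤ k) (hno : Odd n) (hko : Odd k)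
    (hm : n + k = 2 * m) (lam : ℕ × ℕ → ℤ) :
    ∃ P : Polynomial ℤ, (∀ i : ℕ, P.coeff i ≠ 0 → Odd i) ∧ P.natDegree ≤ n ∧
      ∀ c : ℤ,
        ∑ p ∈ (Finset.range (m + 1) ×ˢ Finset.range (m + 1)).filter
            (fun p => p.1 + p.2 ≤ m),
          lam p • (y n k c ^ (2 * p.1) * x n k c ^ (2 * p.2) *
            (y n k c + c • x n k c) ^ (2 * (m - p.1 - p.2)))
          = P.eval c • (x n k c ^ n * y n k c ^ k) := by
  classical
  have hm' : n + k = 2*m := hm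
  set S := (Finset.range (m + 1) ×ˢ Finset.range (m + 1)).filter (fun p => p.1 + p.2 ≤ m) with hS
  refine ⟨∑ p ∈ S, Polynomial.C (lam p * s n k m p.1 p.2) * Polynomial.X ^ (n - 2*p.2), ?_, ?_, ?_⟩
  · intro i hi
    by_contra hodd
    apply hi
    rw [Polynomial.finset_sum_coeff]
    apply Finset.sum_eq_zero
    intro p hp
    rw [Polynomial.coeff_C_mul, Polynomial.coeff_X_pow]
    by_cases he : i = n - 2*p.2
    · rw [if_pos he, mul_one]
      have hb : n < 2*p.2 := by
        by_contra hb
        exact hodd (he ▸ (Nat.Odd.sub_even (by omega) hno (even_two_mul _)))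
      have hab : p.1 + p.2 ≤ m := (Finset.mem_filter.mp hp).2
      rw [s_eq_zero n k m p.1 p.2 hm' hab hb, mul_zero]
    · rw [if_neg he, mul_zero]
  · apply Polynomial.natDegree_sum_le_of_forall_le
    intro p hp
    refine le_trans (Polynomial.natDegree_C_mul_le _ _) ?_
    simpa using Nat.sub_le n (2*p.2)
  · intro c
    calc ∑ p ∈ S, lam p • (y n k c ^ (2 * p.1) * x n k c ^ (2 * p.2) *
            (y n k c + c • x n k c) ^ (2 * (m - p.1 - p.2)))
        = ∑ p ∈ S, (lam p * (s n k m p.1 p.2 * c^(n-2*p.2))) • (x n k c ^ n * y n k c ^ k) := by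
          apply Finset.sum_congr rfl
          intro p hp
          have hab : p.1 + p.2 ≤ m := (Finset.mem_filter.mp hp).2
          rw [show c • x n k c = (c : R n k c) * x n k c from zsmul_eq_mul _ _,
            term_eval n k m hm' p.1 p.2 hab c, zsmul_eq_mul, zsmul_eq_mul]
          push_cast
          ring
      _ = (∑ p ∈ S, lam p * (s n k m p.1 p.2 * c^(n-2*p.2))) • (x n k c ^ n * y n k c ^ k) := by
          rw [Finset.sum_smul]
      _ = _ := by
          congr 1
          rw [Polynomial.eval_finset_sum]
          apply Finset.sum_congr rfl
          intro p hp
          simp [mul_assoc]
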